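/- For every integer d ≥ 2, every α ∈ (0, 2^{−d}) and every ε > 0, there exists λ₀ such that for every integer λ ≥ λ₀ there exists p₀ such that for every prime p ≥ p₀ there exists a subset A ⊆ ℤ/pℤ with |A| ≥ αp and |A + λ·A| ≤ (2^{d−1}·α^{1−1/d} + ε)·p. -/

import Mathlib

open Pointwise Finset

private lemma nat_add_div_le (x y n : ℕ) : (x + y) / n ≤ x / n + y / n + 1 := by
  rcases Nat.eq_zero_or_pos n with h | h
  · simp [h]
  · rw [Nat.add_div h]
    split <;> omega

private def Fb (p l M : ℕ) : ℕ → ℕ → ℕ → ℕ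
  | 0, _, len => len
  | k+1, s, len => (l ^ s * len / p + 2) * Fb p l M k (s+1) ((M-1) / l ^ s + 1)

private lemma cnt (p l M : ℕ) (hp : 0 < p) (hl : 0 < l) (hM : 0 < M) :
    ∀ (k s a len : ℕ) (E : ℕ → ℕ),
      ((Finset.Ico a (a+len)).filter
        (fun v => ∀ j < k, (l ^ (s+j) * v + E j) % p < M)).card ≤ Fb p l M k s len := by
  intro k
  induction k with
  | zero =>
    intro s a len E
    simpa [Fb] using (Finset.card_filter_le (Finset.Ico a (a+len)) _).trans (by simp)
  | succ k ih =>
    intro s a len E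
    set S := (Finset.Ico a (a+len)).filter
      (fun v => ∀ j < k+1, (l ^ (s+j) * v + E j) % p < M) with hSdef
    set lo := (l^s*a + E 0)/p with hlo
    set hi := (l^s*(a+len) + E 0)/p with hhi
    have hsub : S ⊆ (Finset.Icc lo hi).biUnion
        (fun q => S.filter (fun v => (l^s*v + E 0)/p = q)) := by
      intro v hv
      rw [Finset.mem_biUnion]
      refine ⟨(l^s*v + E 0)/p, ?_, by simp [hv]⟩
      obtain ⟨hv1, _⟩ := Finset.mem_filter.mp hv
      obtain ⟨ha, hb⟩ := Finset.mem_Ico.mp hv1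
      refine Finset.mem_Icc.mpr ⟨?_, ?_⟩
      · exact Nat.div_le_div_right (Nat.add_le_add_right (Nat.mul_le_mul_left _ ha) _)
      · exact Nat.div_le_div_right (Nat.add_le_add_right (Nat.mul_le_mul_left _ hb.le) _)
    have hpiece : ∀ q ∈ Finset.Icc lo hi,
        (S.filter (fun v => (l^s*v + E 0)/p = q)).card ≤ Fb p l M k (s+1) ((M-1)/l^s + 1) := by
      intro q _
      rcases (S.filter (fun v => (l^s*v + E 0)/p = q)).eq_empty_or_nonempty with he | hne
      · simp [he]
      · set P := S.filter (fun v => (l^s*v + E 0)/p = q) with hPdef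
        have hmP : P.min' hne ∈ P := P.min'_mem hne
        set m := P.min' hne with hm
        have hls : 0 < l^s := Nat.pow_pos hl
        have hsub2 : P ⊆ (Finset.Ico m (m + ((M-1)/l^s + 1))).filter
            (fun v => ∀ j < k, (l ^ ((s+1)+j) * v + E (j+1)) % p < M) := by
          intro v hvP
          have hmv : m ≤ v := P.min'_le v hvP
          obtain ⟨hvS, hvq⟩ := Finset.mem_filter.mp hvP
          obtain ⟨hmS, hmq⟩ := Finset.mem_filter.mp hmP
          obtain ⟨_, hvc⟩ := Finset.mem_filter.mp hvS
          obtain ⟨_, hmc⟩ := Finset.mem_filter.mp hmS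
          have hv0 : (l ^ s * v + E 0) % p < M := by simpa using hvc 0 (by omega)
          have hm0 : (l ^ s * m + E 0) % p < M := by simpa using hmc 0 (by omega)
          have ev := Nat.div_add_mod (l^s*v + E 0) p
          have em := Nat.div_add_mod (l^s*m + E 0) p
          rw [hvq] at ev
          rw [hmq] at em
          have h1 : l^s * v = l^s*m + l^s*(v-m) := by
            rw [← Nat.mul_add, Nat.add_sub_cancel' hmv]
          have hdiff : l^s * (v - m) ≤ M - 1 := by omega
          have hvm2 : v - m ≤ (M-1)/l^s := (Nat.le_div_iff_mul_le hls).mpr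
            (by rw [Nat.mul_comm]; exact hdiff)
          refine Finset.mem_filter.mpr ⟨Finset.mem_Ico.mpr ⟨hmv, by omega⟩, ?_⟩
          intro j hj
          have := hvc (j+1) (by omega)
          rwa [show s + (j+1) = (s+1)+j by omega] at this
        exact (Finset.card_le_card hsub2).trans (ih (s+1) m ((M-1)/l^s + 1) (fun j => E (j+1)))
    have hcard : S.card ≤ (Finset.Icc lo hi).card * Fb p l M k (s+1) ((M-1)/l^s + 1) := by
      calc S.card ≤ ((Finset.Icc lo hi).biUnion
            (fun q => S.filter (fun v => (l^s*v + E 0)/p = q))).card := Finset.card_le_card hsub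
        _ ≤ ∑ q ∈ Finset.Icc lo hi, (S.filter (fun v => (l^s*v + E 0)/p = q)).card :=
            Finset.card_biUnion_le
        _ ≤ ∑ _q ∈ Finset.Icc lo hi, Fb p l M k (s+1) ((M-1)/l^s + 1) :=
            Finset.sum_le_sum hpiece
        _ = (Finset.Icc lo hi).card * Fb p l M k (s+1) ((M-1)/l^s + 1) := by
            rw [Finset.sum_const, smul_eq_mul]
    have hQ : (Finset.Icc lo hi).card ≤ l^s*len/p + 2 := by
      have h1 : hi ≤ lo + (l^s*len/p + 1) := by
        have h2 : l^s*(a+len) + E 0 = (l^s*a + E 0) + l^s*len := by ring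
        rw [hhi, h2]
        have h3 := nat_add_div_le (l^s*a + E 0) (l^s*len) p
        obtain ⟨u, hu⟩ : ∃ u, (l^s*a + E 0)/p = u := ⟨_, rfl⟩
        obtain ⟨w, hw⟩ : ∃ w, (l^s*len)/p = w := ⟨_, rfl⟩
        obtain ⟨z, hz⟩ : ∃ z, ((l^s*a + E 0) + l^s*len)/p = z := ⟨_, rfl⟩
        rw [hu, hw, hz] at h3
        rw [hlo, hz, hu, hw]
        omega
      rw [Nat.card_Icc]
      obtain ⟨w, hw⟩ : ∃ w, (l^s*len)/p = w := ⟨_, rfl⟩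
      rw [hw] at h1 ⊢
      omega
    calc S.card ≤ (Finset.Icc lo hi).card * Fb p l M k (s+1) ((M-1)/l^s + 1) := hcard
      _ ≤ (l^s*len/p + 2) * Fb p l M k (s+1) ((M-1)/l^s + 1) := Nat.mul_le_mul_right _ hQ
      _ = Fb p l M (k+1) s len := rfl



private lemma nat_div_cast_le (m n : ℕ) : ((m / n : ℕ) : ℝ) ≤ (m:ℝ)/(n:ℝ) := by
  have := Nat.cast_div_le (α := ℝ) (m := m) (n := n)
  exact_mod_cast this

private lemma Freal (p l M : ℕ) (hp : 0 < p) (hl : 1 ≤ l) (hM : 1 ≤ M) :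
    ∀ (k s len : ℕ), l ^ (s+k+1) ≤ p →
      (Fb p l M (k+1) s len : ℝ) ≤
        ((l:ℝ)^s * len / p + 2) * (((l:ℝ) * M / p) + 3)^k * ((M:ℝ)/(l:ℝ)^(s+k) + 1) := by
  have hp0 : (0:ℝ) < p := by exact_mod_cast hp
  have hl0 : (0:ℝ) < l := by exact_mod_cast hl
  have hM0 : (0:ℝ) < M := by exact_mod_cast hM
  have hfac : ∀ s len : ℕ, ((l ^ s * len / p + 2 : ℕ) : ℝ) ≤ (l:ℝ)^s * len / p + 2 := by
    intro s len
    have h := nat_div_cast_le (l ^ s * len) p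
    push_cast at h ⊢
    linarith
  have hB : ∀ s : ℕ, (((M-1) / l ^ s + 1 : ℕ):ℝ) ≤ (M:ℝ)/(l:ℝ)^s + 1 := by
    intro s
    push_cast
    have h : (((M-1) / l ^ s : ℕ):ℝ) ≤ ((M-1:ℕ):ℝ)/((l^s:ℕ):ℝ) := nat_div_cast_le _ _
    have h2 : ((M-1:ℕ):ℝ)/((l^s:ℕ):ℝ) ≤ (M:ℝ)/(l:ℝ)^s := by
      push_cast
      gcongr
      exact_mod_cast Nat.sub_le M 1
    linarith
  intro k
  induction k with
  | zero =>
    intro s len _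
    have heq : (Fb p l M 1 s len : ℝ)
        = ((l ^ s * len / p + 2 : ℕ) : ℝ) * (((M-1) / l ^ s + 1 : ℕ) : ℝ) := by
      simp only [Fb]
      push_cast
      ring
    rw [heq, pow_zero, mul_one, Nat.add_zero]
    exact mul_le_mul (hfac s len) (hB s) (by positivity) (by positivity)
  | succ k ih =>
    intro s len hpow
    have hpow' : l ^ ((s+1)+k+1) ≤ p := by
      have he : (s+1)+k+1 = s+(k+1)+1 := by omega
      rw [he]; exact hpow
    have hih := ih (s+1) ((M-1) / l ^ s + 1) hpow'
    have hl3 : (l:ℝ)^(s+1) ≤ (p:ℝ) := by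
      exact_mod_cast le_trans (Nat.pow_le_pow_right hl (by omega)) hpow
    have hBle := hB s
    have hstep : (l:ℝ)^(s+1) * (((M-1) / l ^ s + 1 : ℕ):ℝ) / p + 2 ≤ ((l:ℝ) * M / p) + 3 := by
      have h2 : (l:ℝ)^(s+1) * ((M:ℝ)/(l:ℝ)^s + 1) = (l:ℝ) * M + (l:ℝ)^(s+1) := by
        have hls : (l:ℝ)^s ≠ 0 := by positivity
        field_simp
        ring
      have h4 : (l:ℝ)^(s+1) * (((M-1) / l ^ s + 1 : ℕ):ℝ) ≤ (l:ℝ) * M + (p:ℝ) := by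
        nlinarith [pow_pos hl0 (s+1)]
      have h5 : (l:ℝ)^(s+1) * (((M-1) / l ^ s + 1 : ℕ):ℝ) / p ≤ ((l:ℝ)*M + p)/p := by
        gcongr
      have h6 : ((l:ℝ)*M + p)/p = (l:ℝ)*M/p + 1 := by field_simp
      linarith
    have hchain : (Fb p l M (k+1) (s+1) ((M-1) / l ^ s + 1) : ℝ) ≤
        (((l:ℝ) * M / p) + 3)^(k+1) * ((M:ℝ)/(l:ℝ)^(s+(k+1)) + 1) := by
      calc (Fb p l M (k+1) (s+1) ((M-1) / l ^ s + 1) : ℝ)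
          ≤ ((l:ℝ)^(s+1) * (((M-1) / l ^ s + 1 : ℕ):ℝ) / p + 2) * (((l:ℝ) * M / p) + 3)^k
              * ((M:ℝ)/(l:ℝ)^((s+1)+k) + 1) := hih
        _ ≤ ((((l:ℝ) * M / p) + 3) * (((l:ℝ) * M / p) + 3)^k) * ((M:ℝ)/(l:ℝ)^((s+1)+k) + 1) := by
            apply mul_le_mul_of_nonneg_right _ (by positivity)
            exact mul_le_mul_of_nonneg_right hstep (by positivity)
        _ = (((l:ℝ) * M / p) + 3)^(k+1) * ((M:ℝ)/(l:ℝ)^(s+(k+1)) + 1) := by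
            rw [show (s+1)+k = s+(k+1) by omega, pow_succ]
            ring
    have heq : (Fb p l M (k+1+1) s len : ℝ)
        = ((l ^ s * len / p + 2 : ℕ) : ℝ) * (Fb p l M (k+1) (s+1) ((M-1) / l ^ s + 1) : ℝ) := by
      simp only [Fb]
      push_cast
      ring
    rw [heq]
    calc ((l ^ s * len / p + 2 : ℕ) : ℝ) * (Fb p l M (k+1) (s+1) ((M-1) / l ^ s + 1) : ℝ)
        ≤ ((l:ℝ)^s * len / p + 2) * ((((l:ℝ) * M / p) + 3)^(k+1) * ((M:ℝ)/(l:ℝ)^(s+(k+1)) + 1)) :=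
          mul_le_mul (hfac s len) hchain (by positivity) (by positivity)
      _ = ((l:ℝ)^s * len / p + 2) * (((l:ℝ) * M / p) + 3)^(k+1) * ((M:ℝ)/(l:ℝ)^(s+(k+1)) + 1) := by
          ring

private lemma one_add_pow_le (x : ℝ) (hx0 : 0 ≤ x) (hx1 : x ≤ 1) :
    ∀ n : ℕ, (1+x)^n ≤ 1 + ((2:ℝ)^n - 1)*x := by
  intro n
  induction n with
  | zero => norm_num
  | succ n ih =>
    have h2n : (1:ℝ) ≤ 2^n := one_le_pow₀ (by norm_num)
    have hpos : (0:ℝ) ≤ (1+x)^n := by positivity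
    calc (1+x)^(n+1) = (1+x)^n * (1+x) := by ring
      _ ≤ (1 + ((2:ℝ)^n - 1)*x) * (1+x) := by nlinarith
      _ ≤ 1 + ((2:ℝ)^(n+1) - 1)*x := by
          rw [pow_succ]
          nlinarith [mul_nonneg (mul_nonneg (by linarith : (0:ℝ) ≤ 2^n - 1) hx0)
            (by linarith : (0:ℝ) ≤ 1 - x)]

set_option maxHeartbeats 2000000 in
/-- For every integer `d ≥ 2`, every `α ∈ (0, 2^{−d})` and every `ε > 0`, there exists `lam₀`
such that for every integer `λ ≥ lam₀` there exists `p₀` such that for every prime `p ≥ p₀`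
there exists `A ⊆ ℤ/pℤ` with `|A| ≥ αp` and `|A + λ·A| ≤ (2^{d−1}·α^{1−1/d} + ε)·p`. -/
theorem sum_dilate_upper_construction :
    ∀ d : ℕ, 2 ≤ d → ∀ α : ℝ, 0 < α → α < 1 / 2 ^ d → ∀ ε : ℝ, 0 < ε →
      ∃ lam₀ : ℤ, ∀ lam : ℤ, lam₀ ≤ lam →
        ∃ p₀ : ℕ, ∀ p : ℕ, p₀ ≤ p → p.Prime →
          ∃ A : Finset (ZMod p), α * p ≤ (A.card : ℝ) ∧
            (((A + A.image fun a => (lam : ZMod p) * a).card : ℝ)) ≤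
              (2 ^ (d - 1) * α ^ (1 - 1 / (d : ℝ)) + ε) * p := by
  intro d hd α hα hα2 ε hε
  obtain ⟨k, rfl⟩ : ∃ k, d = k + 2 := ⟨d - 2, by omega⟩
  set b : ℝ := α ^ (((k+2:ℕ):ℝ))⁻¹ with hbdef
  have hkR : (0:ℝ) < ((k+2:ℕ):ℝ) := by positivity
  have hb0 : 0 < b := Real.rpow_pos_of_pos hα _
  have hbd : b ^ (k+2 : ℕ) = α := by
    rw [hbdef, ← Real.rpow_natCast (α ^ (((k+2:ℕ):ℝ))⁻¹) (k+2), ← Real.rpow_mul hα.le]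
    rw [inv_mul_cancel₀ (ne_of_gt hkR), Real.rpow_one]
  have hb2 : b < 1/2 := by
    have hc : (0:ℝ) < (((k+2:ℕ):ℝ))⁻¹ := by positivity
    have h1 : α ^ (((k+2:ℕ):ℝ))⁻¹ < ((1:ℝ)/2^(k+2)) ^ (((k+2:ℕ):ℝ))⁻¹ :=
      Real.rpow_lt_rpow hα.le hα2 hc
    have h2 : ((1:ℝ)/2^(k+2)) ^ (((k+2:ℕ):ℝ))⁻¹ = 1/2 := by
      have e1 : ((1:ℝ)/2^(k+2)) = (2:ℝ) ^ (-((k+2:ℕ):ℝ)) := by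
        rw [Real.rpow_neg (by norm_num), Real.rpow_natCast]
        rw [one_div]
      rw [e1, ← Real.rpow_natCast (2:ℝ) (k+2)] at *
      rw [← Real.rpow_mul (by norm_num : (0:ℝ) ≤ 2)] at *
      rw [show -(((k+2:ℕ):ℝ)) * (((k+2:ℕ):ℝ))⁻¹ = -1 by field_simp]
      rw [Real.rpow_neg_one]
      norm_num
    rw [hbdef]
    linarith [h1.trans_eq h2]
  have hbk1 : (2*b)^(k+1) = 2^(k+1) * α ^ (1 - 1/((k+2:ℕ):ℝ)) := by
    rw [mul_pow]
    congr 1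
    rw [hbdef, ← Real.rpow_natCast (α ^ (((k+2:ℕ):ℝ))⁻¹) (k+1), ← Real.rpow_mul hα.le]
    congr 1
    have : ((k+2:ℕ):ℝ) ≠ 0 := ne_of_gt hkR
    push_cast at this ⊢
    field_simp
    ring
  set δ : ℝ := min 1 ε / 2^(k+2) with hδdef
  have hδ0 : 0 < δ := by
    rw [hδdef]
    have : (0:ℝ) < min 1 ε := lt_min one_pos hε
    positivity
  have hδ1 : δ ≤ 1 := by
    rw [hδdef]
    have h1 : min 1 ε ≤ 1 := min_le_left _ _
    have h2 : (1:ℝ) ≤ 2^(k+2) := one_le_pow₀ (by norm_num)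
    rw [div_le_one (by positivity)]
    linarith
  refine ⟨max 3 ⌈5/(b*δ)⌉, ?_⟩
  intro lam hlam
  set l : ℕ := lam.toNat with hldef
  have hlam3 : (3:ℤ) ≤ lam := le_trans (le_max_left _ _) hlam
  have hl3 : 3 ≤ l := by omega
  have hl1 : 1 ≤ l := by omega
  have hl0 : 0 < l := by omega
  have hlaml : (l : ℤ) = lam := Int.toNat_of_nonneg (by omega)
  have hlR : 5/(b*δ) ≤ (l:ℝ) := by
    have h1 : (⌈5/(b*δ)⌉ : ℤ) ≤ lam := le_trans (le_max_right _ _) hlam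
    have h2 : 5/(b*δ) ≤ (⌈5/(b*δ)⌉ : ℝ) := Int.le_ceil _
    have h3 : ((⌈5/(b*δ)⌉ : ℤ) : ℝ) ≤ (lam : ℝ) := by exact_mod_cast h1
    have h4 : ((lam : ℤ) : ℝ) = (l : ℝ) := by exact_mod_cast hlaml.symm
    linarith
  have hlRpos : (0:ℝ) < l := by exact_mod_cast hl0
  refine ⟨l^(k+4) + ⌈(l:ℝ)^(k+2)/(b*δ)⌉₊ + ⌈4/(1-2*b)⌉₊ + 2, ?_⟩
  intro p hp hpp
  haveI : Fact p.Prime := ⟨hpp⟩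
  haveI : NeZero p := ⟨hpp.pos.ne'⟩
  have hppos : 0 < p := hpp.pos
  have hp0 : (0:ℝ) < p := by exact_mod_cast hppos
  have hp1 : l^(k+4) ≤ p := by omega
  have hp1R : (l:ℝ)^(k+4) ≤ p := by exact_mod_cast hp1
  have hlp : l ≤ p := le_trans (Nat.le_self_pow (by omega) l) hp1
  have hlpR : (l:ℝ) ≤ p := by exact_mod_cast hlp
  have hp2 : (l:ℝ)^(k+2)/(b*δ) ≤ p := by
    have h1 : ⌈(l:ℝ)^(k+2)/(b*δ)⌉₊ ≤ p := by omega
    have h2 : (l:ℝ)^(k+2)/(b*δ) ≤ (⌈(l:ℝ)^(k+2)/(b*δ)⌉₊ : ℝ) := Nat.le_ceil _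
    have h3 : ((⌈(l:ℝ)^(k+2)/(b*δ)⌉₊ : ℕ) : ℝ) ≤ (p:ℝ) := by exact_mod_cast h1
    linarith
  have hp3 : 4/(1-2*b) ≤ p := by
    have h1 : ⌈4/(1-2*b)⌉₊ ≤ p := by omega
    have h2 : 4/(1-2*b) ≤ (⌈4/(1-2*b)⌉₊ : ℝ) := Nat.le_ceil _
    have h3 : ((⌈4/(1-2*b)⌉₊ : ℕ) : ℝ) ≤ (p:ℝ) := by exact_mod_cast h1
    linarith
  -- interval length L and sum length M
  set L : ℕ := ⌈b * p⌉₊ with hLdef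
  have hLlb : b * p ≤ (L:ℝ) := Nat.le_ceil _
  have hLub : (L:ℝ) ≤ b * p + 1 := le_of_lt (Nat.ceil_lt_add_one (by positivity))
  have hL1 : 1 ≤ L := by
    have : (0:ℝ) < b * p := by positivity
    rw [hLdef]
    exact Nat.one_le_ceil_iff.mpr this
  have h2bp : 2*b*(p:ℝ) + 4 ≤ p := by
    have hb2' : 0 < 1 - 2*b := by linarith
    rw [div_le_iff₀ hb2'] at hp3
    nlinarith
  have h2L : 2*L ≤ p := by
    have : (2*L : ℝ) ≤ (p:ℝ) := by push_cast; linarith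
    exact_mod_cast this
  have hLp : L ≤ p := by omega
  set M : ℕ := 2*L - 1 with hMdef
  have hM1 : 1 ≤ M := by omega
  have hMp : M < p := by omega
  have hMub : (M:ℝ) ≤ 2*b*p + 1 := by
    have : (M:ℝ) = 2*(L:ℝ) - 1 := by
      rw [hMdef]; push_cast [Nat.cast_sub (by omega : 1 ≤ 2*L)]; ring
    linarith
  set lc : ZMod p := ((l:ℕ) : ZMod p) with hlcdef
  have hlcast : ((lam : ZMod p)) = lc := by
    rw [hlcdef, ← hlaml]
    push_cast
    ring
  -- the shifted Bohr sets
  set At : (Fin (k+2) → ZMod p) → Finset (ZMod p) := fun t =>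
    univ.filter (fun x => ∀ j : Fin (k+2), (lc^(j:ℕ) * x - t j).val < L) with hAtdef
  have hvalL : (univ.filter fun w : ZMod p => w.val < L).card = L := by
    have he : (univ.filter fun w : ZMod p => w.val < L)
        = (Finset.range L).image (fun n : ℕ => (n : ZMod p)) := by
      ext w
      simp only [mem_filter, mem_univ, true_and, mem_image, mem_range]
      constructor
      · intro h
        exact ⟨w.val, h, ZMod.natCast_rightInverse w⟩
      · rintro ⟨n, hn, rfl⟩
        rwa [ZMod.val_cast_of_lt (lt_of_lt_of_le hn hLp)]
    rw [he, Finset.card_image_of_injOn, Finset.card_range]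
    intro m hm n hn hmn
    simp only [Finset.coe_range, Set.mem_Iio] at hm hn
    have h1 := ZMod.val_cast_of_lt (lt_of_lt_of_le hm hLp)
    have h2 := ZMod.val_cast_of_lt (lt_of_lt_of_le hn hLp)
    have hmn' : ((m : ZMod p)) = (n : ZMod p) := hmn
    rw [← h1, ← h2, hmn']
  have hcard_shift : ∀ c : ZMod p, (univ.filter fun y : ZMod p => (c - y).val < L).card = L := by
    intro c
    have he : (univ.filter fun y : ZMod p => (c - y).val < L)
        = (univ.filter fun w : ZMod p => w.val < L).image (fun w => c - w) := by
      ext y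
      simp only [mem_filter, mem_univ, true_and, mem_image]
      constructor
      · intro h
        exact ⟨c - y, h, by ring⟩
      · rintro ⟨w, hw, rfl⟩
        rwa [show c - (c - w) = w by ring]
    rw [he, Finset.card_image_of_injOn, hvalL]
    intro x _ y _ hxy
    have hxy' : c - x = c - y := hxy
    have : c - (c - x) = c - (c - y) := by rw [hxy']
    simpa using this
  have key : ∑ t : Fin (k+2) → ZMod p, (At t).card = p * L^(k+2) := by
    calc ∑ t : Fin (k+2) → ZMod p, (At t).card
        = ∑ t : Fin (k+2) → ZMod p, ∑ x : ZMod p,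
            (if (∀ j : Fin (k+2), (lc^(j:ℕ) * x - t j).val < L) then 1 else 0) := by
          apply Finset.sum_congr rfl
          intro t _
          rw [hAtdef, Finset.card_filter]
      _ = ∑ x : ZMod p, ∑ t : Fin (k+2) → ZMod p,
            (if (∀ j : Fin (k+2), (lc^(j:ℕ) * x - t j).val < L) then 1 else 0) := Finset.sum_comm
      _ = ∑ _x : ZMod p, L^(k+2) := by
          apply Finset.sum_congr rfl
          intro x _
          rw [← Finset.card_filter]
          have he : (univ.filter (fun t : Fin (k+2) → ZMod p =>
              ∀ j : Fin (k+2), (lc^(j:ℕ) * x - t j).val < L))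
              = Fintype.piFinset (fun j : Fin (k+2) =>
                  univ.filter (fun y : ZMod p => (lc^(j:ℕ) * x - y).val < L)) := by
            ext t
            simp [Fintype.mem_piFinset]
          rw [he, Fintype.card_piFinset]
          simp [hcard_shift]
      _ = p * L^(k+2) := by
          simp [Finset.card_univ, ZMod.card]
  have hex : ∃ t : Fin (k+2) → ZMod p, p * L^(k+2) ≤ p^(k+2) * (At t).card := by
    by_contra hcon
    push_neg at hcon
    have hlt : ∑ t : Fin (k+2) → ZMod p, (p^(k+2) * (At t).card)
        < ∑ _t : Fin (k+2) → ZMod p, (p * L^(k+2)) :=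
      Finset.sum_lt_sum_of_nonempty Finset.univ_nonempty (fun t _ => hcon t)
    rw [← Finset.mul_sum, key, Finset.sum_const, Finset.card_univ] at hlt
    have hcardfun : Fintype.card (Fin (k+2) → ZMod p) = p^(k+2) := by
      simp [ZMod.card]
    rw [hcardfun, smul_eq_mul] at hlt
    exact lt_irrefl _ hlt
  obtain ⟨t, ht⟩ := hex
  refine ⟨At t, ?_, ?_⟩
  · -- lower bound
    have htR : (p:ℝ) * (L:ℝ)^(k+2) ≤ (p:ℝ)^(k+2) * ((At t).card : ℝ) := by
      exact_mod_cast ht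
    have h1 : (b*(p:ℝ))^(k+2) ≤ (L:ℝ)^(k+2) := by
      apply pow_le_pow_left₀ (by positivity) hLlb
    have h2 : α * (p:ℝ) * (p:ℝ)^(k+2) ≤ ((At t).card : ℝ) * (p:ℝ)^(k+2) := by
      have e1 : α * (p:ℝ) * (p:ℝ)^(k+2) = (b*(p:ℝ))^(k+2) * p := by
        rw [mul_pow, hbd]; ring
      calc α * (p:ℝ) * (p:ℝ)^(k+2) = (b*(p:ℝ))^(k+2) * p := e1
        _ ≤ (L:ℝ)^(k+2) * p := mul_le_mul_of_nonneg_right h1 hp0.le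
        _ = (p:ℝ) * (L:ℝ)^(k+2) := by ring
        _ ≤ (p:ℝ)^(k+2) * ((At t).card : ℝ) := htR
        _ = ((At t).card : ℝ) * (p:ℝ)^(k+2) := by ring
    exact le_of_mul_le_mul_right h2 (by positivity)
  · -- upper bound
    set s' : Fin (k+1) → ZMod p := fun j => t j.castSucc + t j.succ with hs'def
    set Cset : Finset (ZMod p) := univ.filter
      (fun z => ∀ j : Fin (k+1), (lc^(j:ℕ) * z - s' j).val < M) with hCdef
    have hsub : (At t) + (At t).image (fun a => (lam : ZMod p) * a) ⊆ Cset := by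
      intro z hz
      rw [Finset.mem_add] at hz
      obtain ⟨x, hx, y, hy, rfl⟩ := hz
      obtain ⟨a, ha, rfl⟩ := Finset.mem_image.mp hy
      have hx' := (Finset.mem_filter.mp hx).2
      have ha' := (Finset.mem_filter.mp ha).2
      refine Finset.mem_filter.mpr ⟨Finset.mem_univ _, ?_⟩
      intro j
      have hxv : (lc^(j:ℕ) * x - t j.castSucc).val < L := by
        have := hx' j.castSucc
        simpa using this
      have hav : (lc^((j:ℕ)+1) * a - t j.succ).val < L := by
        have := ha' j.succ
        simpa using this
      have heq : lc^(j:ℕ) * (x + (lam : ZMod p) * a) - s' j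
          = (lc^(j:ℕ) * x - t j.castSucc) + (lc^((j:ℕ)+1) * a - t j.succ) := by
        rw [hlcast]
        simp only [hs'def]
        ring
      rw [heq, ZMod.val_add_of_lt (by omega)]
      omega
    set E : ℕ → ℕ := fun j => if h : j < k+1 then (-(s' ⟨j, h⟩)).val else 0 with hEdef
    have hE0p : E 0 < p := by
      rw [hEdef]
      simp only [dif_pos (by omega : 0 < k+1)]
      exact ZMod.val_lt _
    have hst : ∀ (j : ℕ) (hj : j < k+1) (z : ZMod p),
        (lc^j * z - s' ⟨j, hj⟩).val = (l^j * z.val + E j) % p := by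
      intro j hj z
      have hE : ((E j : ℕ) : ZMod p) = -(s' ⟨j, hj⟩) := by
        rw [hEdef]
        simp only [dif_pos hj]
        exact ZMod.natCast_rightInverse _
      have he2 : ((l^j * z.val + E j : ℕ) : ZMod p) = lc^j * z - s' ⟨j, hj⟩ := by
        push_cast
        rw [show ((z.val:ℕ):ZMod p) = z from ZMod.natCast_rightInverse z, hE, ← hlcdef]
        ring
      rw [← he2, ZMod.val_natCast]
    set NumSet : Finset ℕ := (Finset.range p).filter
      (fun v => ∀ j < k+1, (l^j * v + E j) % p < M) with hNdef
    have hCN : Cset.card ≤ NumSet.card := by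
      apply Finset.card_le_card_of_injOn (fun z => z.val)
      · intro z hz
        have hzc := (Finset.mem_filter.mp hz).2
        refine Finset.mem_filter.mpr ⟨Finset.mem_range.mpr (ZMod.val_lt z), ?_⟩
        intro j hj
        rw [← hst j hj z]
        exact hzc ⟨j, hj⟩
      · intro x _ y _ h
        exact ZMod.val_injective p h
    have hsplit : NumSet ⊆
        ((Finset.Ico 0 (0 + (M - E 0))).filter
          (fun v => ∀ j < k, (l^(1+j) * v + E (j+1)) % p < M))
        ∪ ((Finset.Ico (p - E 0) ((p - E 0) + min (E 0) M)).filter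
          (fun v => ∀ j < k, (l^(1+j) * v + E (j+1)) % p < M)) := by
      intro v hv
      obtain ⟨hvr, hvc⟩ := Finset.mem_filter.mp hv
      have hvp : v < p := Finset.mem_range.mp hvr
      have h0 : (v + E 0) % p < M := by
        have := hvc 0 (by omega)
        simpa using this
      have hrest : ∀ j < k, (l^(1+j) * v + E (j+1)) % p < M := by
        intro j hj
        have h := hvc (j+1) (by omega)
        rw [show 1+j = j+1 by omega]
        exact h
      rw [Finset.mem_union]
      by_cases hvE : v + E 0 < p
      · left
        have h0' : v + E 0 < M := by rwa [Nat.mod_eq_of_lt hvE] at h0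
        exact Finset.mem_filter.mpr ⟨Finset.mem_Ico.mpr ⟨by omega, by omega⟩, hrest⟩
      · right
        push_neg at hvE
        have hmod : (v + E 0) % p = v + E 0 - p := by
          rw [Nat.mod_eq_sub_mod hvE, Nat.mod_eq_of_lt (by omega)]
        rw [hmod] at h0
        exact Finset.mem_filter.mpr ⟨Finset.mem_Ico.mpr ⟨by omega, by omega⟩, hrest⟩
    have hNS : NumSet.card ≤ Fb p l M k 1 (M - E 0) + Fb p l M k 1 (min (E 0) M) := by
      calc NumSet.card ≤ _ := Finset.card_le_card hsplit
        _ ≤ _ := Finset.card_union_le _ _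
        _ ≤ Fb p l M k 1 (M - E 0) + Fb p l M k 1 (min (E 0) M) := by
            apply Nat.add_le_add
            · exact cnt p l M hppos hl0 (by omega) k 1 0 (M - E 0) (fun j => E (j+1))
            · exact cnt p l M hppos hl0 (by omega) k 1 (p - E 0) (min (E 0) M) (fun j => E (j+1))
    have hlen : (M - E 0) + min (E 0) M ≤ M := by omega
    have hNumR : (NumSet.card : ℝ) ≤ ((l:ℝ)*M/p + 4)^k * ((M:ℝ)/(l:ℝ)^k + 1) := by
      rcases k with _ | k'
      · have hcM : NumSet.card ≤ M := by
          have hc : NumSet.card ≤ (M - E 0) + min (E 0) M := by simpa [Fb] using hNS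
          omega
        calc (NumSet.card:ℝ) ≤ (M:ℝ) := by exact_mod_cast hcM
          _ ≤ ((l:ℝ)*M/p + 4)^0 * ((M:ℝ)/(l:ℝ)^0 + 1) := by
              simp only [pow_zero, one_mul]
              norm_num
      · have hpw : l^(1+k'+1) ≤ p := le_trans (Nat.pow_le_pow_right hl1 (by omega)) hp1
        have h1 := Freal p l M hppos hl1 hM1 k' 1 (M - E 0) hpw
        have h2 := Freal p l M hppos hl1 hM1 k' 1 (min (E 0) M) hpw
        set X : ℝ := (l:ℝ)*M/p with hXdef
        set G : ℝ := (X + 3)^k' * ((M:ℝ)/(l:ℝ)^(1+k') + 1) with hGdef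
        have hG0 : 0 ≤ G := by
          rw [hGdef]
          have : (0:ℝ) ≤ X + 3 := by rw [hXdef]; positivity
          positivity
        have h1' : (Fb p l M (k'+1) 1 (M - E 0) : ℝ)
            ≤ ((l:ℝ)*((M - E 0:ℕ):ℝ)/p + 2) * G := by
          rw [hGdef]
          calc (Fb p l M (k'+1) 1 (M - E 0) : ℝ)
              ≤ ((l:ℝ)^1*((M - E 0:ℕ):ℝ)/p + 2) * (X + 3)^k' * ((M:ℝ)/(l:ℝ)^(1+k') + 1) := h1
            _ = ((l:ℝ)*((M - E 0:ℕ):ℝ)/p + 2) * ((X + 3)^k' * ((M:ℝ)/(l:ℝ)^(1+k') + 1)) := by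
                rw [pow_one]; ring
        have h2' : (Fb p l M (k'+1) 1 (min (E 0) M) : ℝ)
            ≤ ((l:ℝ)*((min (E 0) M:ℕ):ℝ)/p + 2) * G := by
          rw [hGdef]
          calc (Fb p l M (k'+1) 1 (min (E 0) M) : ℝ)
              ≤ ((l:ℝ)^1*((min (E 0) M:ℕ):ℝ)/p + 2) * (X + 3)^k' * ((M:ℝ)/(l:ℝ)^(1+k') + 1) := h2
            _ = ((l:ℝ)*((min (E 0) M:ℕ):ℝ)/p + 2) * ((X + 3)^k' * ((M:ℝ)/(l:ℝ)^(1+k') + 1)) := by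
                rw [pow_one]; ring
        have hlenR : ((M - E 0:ℕ):ℝ) + ((min (E 0) M:ℕ):ℝ) ≤ (M:ℝ) := by
          exact_mod_cast hlen
        have hsumfac : ((l:ℝ)*((M - E 0:ℕ):ℝ)/p + 2) + ((l:ℝ)*((min (E 0) M:ℕ):ℝ)/p + 2)
            ≤ X + 4 := by
          rw [hXdef]
          have hnum : (l:ℝ)*((M - E 0:ℕ):ℝ) + (l:ℝ)*((min (E 0) M:ℕ):ℝ) ≤ (l:ℝ)*M := by
            nlinarith [hlRpos]
          have h : (l:ℝ)*((M - E 0:ℕ):ℝ)/p + (l:ℝ)*((min (E 0) M:ℕ):ℝ)/p ≤ (l:ℝ)*M/p := by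
            rw [← add_div]
            gcongr
          linarith
        have hNSR : (NumSet.card : ℝ)
            ≤ (Fb p l M (k'+1) 1 (M - E 0) : ℝ) + (Fb p l M (k'+1) 1 (min (E 0) M) : ℝ) := by
          exact_mod_cast hNS
        have hstep2 : (NumSet.card : ℝ) ≤ (X + 4) * G := by
          calc (NumSet.card : ℝ)
              ≤ (Fb p l M (k'+1) 1 (M - E 0) : ℝ) + (Fb p l M (k'+1) 1 (min (E 0) M) : ℝ) := hNSR
            _ ≤ ((l:ℝ)*((M - E 0:ℕ):ℝ)/p + 2) * G + ((l:ℝ)*((min (E 0) M:ℕ):ℝ)/p + 2) * G := by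
                exact add_le_add h1' h2'
            _ = (((l:ℝ)*((M - E 0:ℕ):ℝ)/p + 2) + ((l:ℝ)*((min (E 0) M:ℕ):ℝ)/p + 2)) * G := by
                ring
            _ ≤ (X + 4) * G := mul_le_mul_of_nonneg_right hsumfac hG0
        have hGle : G ≤ (X + 4)^k' * ((M:ℝ)/(l:ℝ)^(k'+1) + 1) := by
          rw [hGdef, show 1+k' = k'+1 by omega]
          have hX30 : (0:ℝ) ≤ X + 3 := by rw [hXdef]; positivity
          have : (X + 3)^k' ≤ (X + 4)^k' := pow_le_pow_left₀ hX30 (by linarith) k'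
          have hC0 : (0:ℝ) ≤ (M:ℝ)/(l:ℝ)^(k'+1) + 1 := by positivity
          exact mul_le_mul_of_nonneg_right this hC0
        calc (NumSet.card : ℝ) ≤ (X + 4) * G := hstep2
          _ ≤ (X + 4) * ((X + 4)^k' * ((M:ℝ)/(l:ℝ)^(k'+1) + 1)) := by
              apply mul_le_mul_of_nonneg_left hGle (by rw [hXdef]; positivity)
          _ = (X + 4)^(k'+1) * ((M:ℝ)/(l:ℝ)^(k'+1) + 1) := by
              rw [pow_succ]; ring
          _ = ((l:ℝ)*M/p + 4)^(k'+1) * ((M:ℝ)/(l:ℝ)^(k'+1) + 1) := by rw [hXdef]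
    -- numeric endgame
    have hcard1 : (((At t) + (At t).image fun a => (lam : ZMod p) * a).card : ℝ)
        ≤ (NumSet.card : ℝ) := by
      exact_mod_cast le_trans (Finset.card_le_card hsub) hCN
    have hXb : (l:ℝ)*M/p + 4 ≤ 2*b*(l:ℝ)*(1+δ) := by
      have h1 : (l:ℝ)*M/p ≤ 2*b*l + 1 := by
        rw [div_le_iff₀ hp0]
        nlinarith [hlpR, hMub, hlRpos]
      have h2 : 5 ≤ 2*b*(l:ℝ)*δ := by
        rw [div_le_iff₀ (by positivity)] at hlR
        nlinarith
      nlinarith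
    have hYb : (M:ℝ)/(l:ℝ)^k + 1 ≤ (2*b*p/(l:ℝ)^k)*(1+δ) := by
      have hlk : (0:ℝ) < (l:ℝ)^k := by positivity
      have hlk1 : (1:ℝ) ≤ (l:ℝ)^k := one_le_pow₀ (by exact_mod_cast hl1)
      have h1 : (M:ℝ)/(l:ℝ)^k ≤ 2*b*p/(l:ℝ)^k + 1 := by
        calc (M:ℝ)/(l:ℝ)^k ≤ (2*b*p+1)/(l:ℝ)^k := by gcongr
          _ = 2*b*p/(l:ℝ)^k + 1/(l:ℝ)^k := by ring
          _ ≤ 2*b*p/(l:ℝ)^k + 1 := by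
              have : 1/(l:ℝ)^k ≤ 1 := by rw [div_le_one hlk]; exact hlk1
              linarith
      have h2 : 2 ≤ (2*b*p/(l:ℝ)^k)*δ := by
        have h3 := hp2
        rw [div_le_iff₀ (by positivity)] at h3
        have h4 : (l:ℝ)^k ≤ (l:ℝ)^(k+2) := pow_le_pow_right₀ (by exact_mod_cast hl1) (by omega)
        rw [div_mul_eq_mul_div, le_div_iff₀ hlk]
        nlinarith
      linarith
    have hfinal : ((l:ℝ)*M/p + 4)^k * ((M:ℝ)/(l:ℝ)^k + 1)
        ≤ (2*b)^(k+1) * (1+δ)^(k+1) * p := by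
      have hX0 : (0:ℝ) ≤ (l:ℝ)*M/p + 4 := by positivity
      have h1 : ((l:ℝ)*M/p + 4)^k ≤ (2*b*(l:ℝ)*(1+δ))^k := pow_le_pow_left₀ hX0 hXb k
      have h2 : (0:ℝ) ≤ (M:ℝ)/(l:ℝ)^k + 1 := by positivity
      have h3 : ((l:ℝ)*M/p + 4)^k * ((M:ℝ)/(l:ℝ)^k + 1)
          ≤ (2*b*(l:ℝ)*(1+δ))^k * ((2*b*p/(l:ℝ)^k)*(1+δ)) :=
        mul_le_mul h1 hYb h2 (by positivity)
      have hlk : ((l:ℝ))^k ≠ 0 := by positivity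
      have he : (2*b*(l:ℝ)*(1+δ))^k * ((2*b*p/(l:ℝ)^k)*(1+δ))
          = (2*b)^(k+1) * (1+δ)^(k+1) * p := by
        have hpw3 : (2*b*(l:ℝ)*(1+δ))^k = (2*b)^k*(1+δ)^k*(l:ℝ)^k := by
          rw [mul_pow, mul_pow]; ring
        rw [hpw3]
        field_simp
        ring
      linarith [h3.trans_eq he]
    have hδe : (1+δ)^(k+1) ≤ 1 + min 1 ε := by
      have h1 := one_add_pow_le δ hδ0.le hδ1 (k+1)
      have hm0 : (0:ℝ) ≤ min 1 ε := le_min (by norm_num) hε.le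
      have h2 : ((2:ℝ)^(k+1) - 1) * δ ≤ min 1 ε := by
        rw [hδdef]
        rw [mul_div_assoc']
        rw [div_le_iff₀ (by positivity : (0:ℝ) < 2^(k+2))]
        have h4 : ((2:ℝ)^(k+1) - 1) ≤ 2^(k+2) := by
          have : (2:ℝ)^(k+1) ≤ 2^(k+2) := pow_le_pow_right₀ (by norm_num) (by omega)
          linarith
        nlinarith
      linarith
    have h2b : 2*b ≤ 1 := by linarith
    have h2b0 : (0:ℝ) ≤ 2*b := by linarith
    have h2bk : (2*b)^(k+1) ≤ 1 := pow_le_one₀ h2b0 h2b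
    have hminε : min 1 ε ≤ ε := min_le_right _ _
    have hm0 : (0:ℝ) ≤ min 1 ε := le_min (by norm_num) hε.le
    have hlast : (2*b)^(k+1) * (1+δ)^(k+1) * p
        ≤ (2^(k+1) * α ^ (1 - 1/((k+2:ℕ):ℝ)) + ε) * p := by
      rw [← hbk1]
      have hpos : (0:ℝ) ≤ (2*b)^(k+1) := by positivity
      have h1 : (2*b)^(k+1) * (1+δ)^(k+1) ≤ (2*b)^(k+1) * (1 + min 1 ε) :=
        mul_le_mul_of_nonneg_left hδe hpos
      have h2 : (2*b)^(k+1) * (1 + min 1 ε) ≤ (2*b)^(k+1) + ε := by nlinarith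
      nlinarith
    calc (((At t) + (At t).image fun a => (lam : ZMod p) * a).card : ℝ)
        ≤ (NumSet.card : ℝ) := hcard1
      _ ≤ ((l:ℝ)*M/p + 4)^k * ((M:ℝ)/(l:ℝ)^k + 1) := hNumR
      _ ≤ (2*b)^(k+1) * (1+δ)^(k+1) * p := hfinal
      _ ≤ (2^(k+1) * α ^ (1 - 1/((k+2:ℕ):ℝ)) + ε) * p := hlast
      _ = (2^(k+2-1) * α ^ (1 - 1/((k+2:ℕ):ℝ)) + ε) * p := by norm_num
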